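/- Suppose for each ε in (0,η) there is a cycle (x_1^ε,...,x_m^ε) of the under-relaxed operators with (x_m^ε) bounded as ε → 0. Then all coordinates (x_i^ε) are bounded, ‖x_i^ε − x_{i−1}^ε‖ → 0 as ε → 0 for each i (cyclically), and T x_m^ε − x_m^ε → 0 strongly as ε → 0. Consequently Fix T ≠ ∅ and every weak sequential cluster point of (x_1^ε,...,x_m^ε) is of the form (x,...,x) with x ∈ Fix T. -/

import Mathlib

open Filter Topology
open scoped RealInnerProductSpace

lemma ulim_exists (U : Ultrafilter ℕ) (f : ℕ → ℝ) (M : ℝ) (hf : ∀ n, f n ∈ Set.Icc (0:ℝ) M) :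
    ∃ L ∈ Set.Icc (0:ℝ) M, Tendsto f (U : Filter ℕ) (𝓝 L) := by
  obtain ⟨L, hL, hle⟩ := (isCompact_Icc (a := (0:ℝ)) (b := M)).ultrafilter_le_nhds (U.map f)
    (by
      rw [le_principal_iff]
      exact Filter.mem_map.2 (U.sets_of_superset Filter.univ_mem (fun n _ => hf n)))
  exact ⟨L, hL, hle⟩

theorem fix_of_approx {H : Type*} [NormedAddCommGroup H] [InnerProductSpace ℝ H] [CompleteSpace H]
    {D : Set H} (hDc : IsClosed D) (hDconv : Convex ℝ D)
    (S : H → H) (hmapS : Set.MapsTo S D D)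
    (hneS : ∀ a ∈ D, ∀ b ∈ D, ‖S a - S b‖ ≤ ‖a - b‖)
    (y : ℕ → H) (hyD : ∀ n, y n ∈ D) (β : ℝ) (hyb : ∀ n, ‖y n‖ ≤ β)
    (hδ : Tendsto (fun n => ‖S (y n) - y n‖) atTop (𝓝 0)) :
    ∃ p ∈ D, S p = p := by
  have hβ0 : (0:ℝ) ≤ β := le_trans (norm_nonneg _) (hyb 0)
  set U : Ultrafilter ℕ := Ultrafilter.of atTop with hUdef
  have hU : (U : Filter ℕ) ≤ atTop := Ultrafilter.of_le atTop
  -- the asymptotic "radius" function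
  have key : ∀ z : H, ∃ L, 0 ≤ L ∧ Tendsto (fun n => ‖y n - z‖ ^ 2) (U : Filter ℕ) (𝓝 L) := by
    intro z
    obtain ⟨L, hL, hlim⟩ := ulim_exists U (fun n => ‖y n - z‖ ^ 2) ((β + ‖z‖) ^ 2)
      (fun n => ⟨by positivity, by
        have h1 : ‖y n - z‖ ≤ β + ‖z‖ :=
          (norm_sub_le _ _).trans (add_le_add_left (hyb n) _)
        exact pow_le_pow_left₀ (norm_nonneg _) h1 2⟩)
    exact ⟨L, hL.1, hlim⟩
  choose φ hφ0 hφ using key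
  have huniq : ∀ {f : ℕ → ℝ} {a b : ℝ}, Tendsto f (U : Filter ℕ) (𝓝 a) →
      Tendsto f (U : Filter ℕ) (𝓝 b) → a = b := fun h1 h2 => tendsto_nhds_unique h1 h2
  -- parallelogram identity for φ
  have par : ∀ z w : H, 4 * φ ((2:ℝ)⁻¹ • (z + w)) + ‖z - w‖ ^ 2 = 2 * (φ z + φ w) := by
    intro z w
    have hpt : ∀ n, 4 * ‖y n - (2:ℝ)⁻¹ • (z + w)‖ ^ 2 + ‖z - w‖ ^ 2
        = 2 * (‖y n - z‖ ^ 2 + ‖y n - w‖ ^ 2) := by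
      intro n
      have h1 : y n - (2:ℝ)⁻¹ • (z + w) = (2:ℝ)⁻¹ • ((y n - z) + (y n - w)) := by
        module
      have hpl := parallelogram_law_with_norm ℝ (y n - z) (y n - w)
      have h3 : ‖y n - (2:ℝ)⁻¹ • (z + w)‖ ^ 2 = (4:ℝ)⁻¹ * ‖(y n - z) + (y n - w)‖ ^ 2 := by
        rw [h1, norm_smul]
        simp [mul_pow]
        norm_num
      have h4 : (y n - z) - (y n - w) = w - z := by abel
      have h5 : ‖z - w‖ = ‖(y n - z) - (y n - w)‖ := by rw [h4, norm_sub_rev]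
      rw [h3, h5]
      nlinarith [hpl]
    have t1 : Tendsto (fun n => 4 * ‖y n - (2:ℝ)⁻¹ • (z + w)‖ ^ 2 + ‖z - w‖ ^ 2)
        (U : Filter ℕ) (𝓝 (4 * φ ((2:ℝ)⁻¹ • (z + w)) + ‖z - w‖ ^ 2)) :=
      ((hφ _).const_mul 4).add tendsto_const_nhds
    have t2 : Tendsto (fun n => 2 * (‖y n - z‖ ^ 2 + ‖y n - w‖ ^ 2))
        (U : Filter ℕ) (𝓝 (2 * (φ z + φ w))) := ((hφ z).add (hφ w)).const_mul 2
    exact huniq t1 (by rwa [tendsto_congr hpt] at t1 ⊢ <;> exact t2)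
  -- infimum
  set μ := sInf (φ '' D) with hμdef
  have hbb : BddBelow (φ '' D) := ⟨0, by rintro r ⟨a, _, rfl⟩; exact hφ0 a⟩
  have hnem : (φ '' D).Nonempty := ⟨φ (y 0), ⟨y 0, hyD 0, rfl⟩⟩
  have hμle : ∀ z ∈ D, μ ≤ φ z := fun z hz => csInf_le hbb ⟨z, hz, rfl⟩
  have hmin : ∀ k : ℕ, ∃ z, z ∈ D ∧ φ z < μ + 1 / (k + 1) := by
    intro k
    obtain ⟨r, ⟨a, ha, rfl⟩, hr⟩ := exists_lt_of_csInf_lt hnem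
      (show μ < μ + 1 / (k + 1) by
        have : (0:ℝ) < 1 / ((k:ℝ) + 1) := by positivity
        linarith)
    exact ⟨a, ha, hr⟩
  choose z hzD hzφ using hmin
  -- pairwise distance bound
  have hzz : ∀ k j : ℕ, ‖z k - z j‖ ^ 2 ≤ 2 * (1 / (k + 1) + 1 / (j + 1)) := by
    intro k j
    have hmid : (2:ℝ)⁻¹ • (z k + z j) ∈ D := by
      have := hDconv (hzD k) (hzD j) (by norm_num : (0:ℝ) ≤ 2⁻¹)
        (by norm_num : (0:ℝ) ≤ 2⁻¹) (by norm_num)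
      rwa [← smul_add] at this
    have h1 := par (z k) (z j)
    have h2 := hμle _ hmid
    have h3 := hzφ k
    have h4 := hzφ j
    nlinarith
  -- Cauchy
  have hcau : CauchySeq z := by
    refine cauchySeq_of_le_tendsto_0 (fun N : ℕ => Real.sqrt (4 / (N + 1))) ?_ ?_
    · intro n m N hn hm
      rw [dist_eq_norm]
      have h1 : ‖z n - z m‖ ^ 2 ≤ 4 / (N + 1) := by
        have h2 := hzz n m
        have h3 : 1 / ((n:ℝ) + 1) ≤ 1 / ((N:ℝ) + 1) := by
          apply one_div_le_one_div_of_le (by positivity)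
          exact_mod_cast add_le_add_left (Nat.cast_le.2 hn) 1
        have h4 : 1 / ((m:ℝ) + 1) ≤ 1 / ((N:ℝ) + 1) := by
          apply one_div_le_one_div_of_le (by positivity)
          exact_mod_cast add_le_add_left (Nat.cast_le.2 hm) 1
        calc ‖z n - z m‖ ^ 2 ≤ 2 * (1 / (n + 1) + 1 / (m + 1)) := h2
          _ ≤ 2 * (1 / (N + 1) + 1 / (N + 1)) := by linarith
          _ = 4 / (N + 1) := by ring
      calc ‖z n - z m‖ = Real.sqrt (‖z n - z m‖ ^ 2) := by
            rw [Real.sqrt_sq (norm_nonneg _)]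
        _ ≤ Real.sqrt (4 / (N + 1)) := Real.sqrt_le_sqrt h1
    · have h5 : Tendsto (fun N : ℕ => 4 / ((N:ℝ) + 1)) atTop (𝓝 0) := by
        have := tendsto_one_div_add_atTop_nhds_zero_nat (𝕜 := ℝ)
        have h6 := this.const_mul (4:ℝ)
        simpa [div_eq_mul_inv, mul_comm] using h6
      have h7 : Tendsto Real.sqrt (𝓝 0) (𝓝 0) := by
        simpa using (Real.continuous_sqrt.tendsto 0)
      exact h7.comp h5
  obtain ⟨p, hp⟩ := cauchySeq_tendsto_of_complete hcau
  have hpD : p ∈ D := hDc.mem_of_tendsto hp (Filter.Eventually.of_forall hzD)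
  -- Lipschitz-type bound for φ
  have lip : ∀ a b : H, |φ a - φ b| ≤ ‖a - b‖ * (2 * β + ‖a‖ + ‖b‖) := by
    intro a b
    have hlim : Tendsto (fun n => |‖y n - a‖ ^ 2 - ‖y n - b‖ ^ 2|) (U : Filter ℕ)
        (𝓝 |φ a - φ b|) := ((hφ a).sub (hφ b)).abs
    refine le_of_tendsto hlim (Filter.Eventually.of_forall fun n => ?_)
    have hu : ‖y n - a‖ ≤ β + ‖a‖ := (norm_sub_le _ _).trans (add_le_add_left (hyb n) _)
    have hv : ‖y n - b‖ ≤ β + ‖b‖ := (norm_sub_le _ _).trans (add_le_add_left (hyb n) _)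
    have hd : |‖y n - a‖ - ‖y n - b‖| ≤ ‖a - b‖ := by
      have h0 := abs_norm_sub_norm_le (y n - a) (y n - b)
      have h1 : (y n - a) - (y n - b) = b - a := by abel
      rw [h1, norm_sub_rev b a] at h0
      exact h0
    have hfac : ‖y n - a‖ ^ 2 - ‖y n - b‖ ^ 2
        = (‖y n - a‖ - ‖y n - b‖) * (‖y n - a‖ + ‖y n - b‖) := by ring
    rw [hfac, abs_mul]
    have h2 : |‖y n - a‖ + ‖y n - b‖| = ‖y n - a‖ + ‖y n - b‖ :=
      abs_of_nonneg (by positivity)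
    rw [h2]
    apply mul_le_mul hd (by linarith) (by positivity) (norm_nonneg _)
  -- φ p = μ
  have hφp : φ p = μ := by
    have h1 : Tendsto (fun k => φ (z k)) atTop (𝓝 μ) := by
      apply tendsto_of_tendsto_of_tendsto_of_le_of_le (g := fun _ => μ)
        (h := fun k : ℕ => μ + 1 / (k + 1)) tendsto_const_nhds
      · have := tendsto_one_div_add_atTop_nhds_zero_nat (𝕜 := ℝ)
        simpa using tendsto_const_nhds.add this
      · exact fun k => hμle _ (hzD k)
      · exact fun k => le_of_lt (hzφ k)
    have hnp : Tendsto (fun k => ‖z k - p‖) atTop (𝓝 0) := by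
      have := (hp.sub (tendsto_const_nhds (x := p)))
      have h2 := (continuous_norm.tendsto (p - p)).comp this
      simpa [Function.comp_def] using h2
    have h3 : Tendsto (fun k => φ (z k)) atTop (𝓝 (φ p)) := by
      rw [tendsto_iff_dist_tendsto_zero]
      apply squeeze_zero (fun k => dist_nonneg)
        (g := fun k => ‖z k - p‖ * (2 * β + (‖z k - p‖ + ‖p‖ + ‖p‖)))
      · intro k
        rw [Real.dist_eq]
        refine (lip (z k) p).trans ?_
        have : ‖z k‖ ≤ ‖z k - p‖ + ‖p‖ := by
          simpa using norm_add_le (z k - p) p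
        have h4 : (0:ℝ) ≤ ‖z k - p‖ := norm_nonneg _
        nlinarith [norm_nonneg p, norm_nonneg (z k - p)]
      · have := hnp.mul ((tendsto_const_nhds (x := 2*β)).add
          ((hnp.add (tendsto_const_nhds (x := ‖p‖))).add (tendsto_const_nhds (x := ‖p‖))))
        simpa using this
    exact tendsto_nhds_unique h3 h1
  -- φ (S p) ≤ μ
  have hSpD : S p ∈ D := hmapS hpD
  have hφSp : φ (S p) ≤ μ := by
    have hδU : Tendsto (fun n => ‖S (y n) - y n‖) (U : Filter ℕ) (𝓝 0) := hδ.mono_left hU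
    have hnormp : Tendsto (fun n => ‖y n - p‖) (U : Filter ℕ) (𝓝 (Real.sqrt (φ p))) := by
      have h1 := (Real.continuous_sqrt.tendsto (φ p)).comp (hφ p)
      have h2 : (fun n => Real.sqrt (‖y n - p‖ ^ 2)) = fun n => ‖y n - p‖ := by
        funext n; rw [Real.sqrt_sq (norm_nonneg _)]
      rwa [Function.comp_def, h2] at h1
    have t2 : Tendsto (fun n => ‖y n - p‖ ^ 2
        + ‖S (y n) - y n‖ * (‖S (y n) - y n‖ + 2 * ‖y n - p‖)) (U : Filter ℕ)
        (𝓝 (φ p + 0 * (0 + 2 * Real.sqrt (φ p)))) :=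
      (hφ p).add (hδU.mul (hδU.add (hnormp.const_mul 2)))
    have hle := le_of_tendsto_of_tendsto' (hφ (S p)) t2 (fun n => by
      have h1 : ‖y n - S p‖ ≤ ‖S (y n) - y n‖ + ‖y n - p‖ := by
        calc ‖y n - S p‖ ≤ ‖y n - S (y n)‖ + ‖S (y n) - S p‖ := by
              simpa using norm_add_le (y n - S (y n)) (S (y n) - S p)
          _ ≤ ‖S (y n) - y n‖ + ‖y n - p‖ := by
              rw [norm_sub_rev (y n)]
              exact add_le_add le_rfl (hneS _ (hyD n) _ hpD)
      nlinarith [norm_nonneg (y n - S p), norm_nonneg (S (y n) - y n), norm_nonneg (y n - p)])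
    rw [hφp] at hle
    simpa using hle
  -- conclude
  refine ⟨p, hpD, ?_⟩
  have hmid : (2:ℝ)⁻¹ • (p + S p) ∈ D := by
    have := hDconv hpD hSpD (by norm_num : (0:ℝ) ≤ 2⁻¹) (by norm_num : (0:ℝ) ≤ 2⁻¹) (by norm_num)
    rwa [← smul_add] at this
  have h1 := par p (S p)
  have h2 := hμle _ hmid
  have h3 : ‖p - S p‖ ^ 2 ≤ 0 := by nlinarith [hμle _ hpD, hφp.le, hφp.ge]
  have h4 : ‖p - S p‖ = 0 := by nlinarith [norm_nonneg (p - S p)]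
  have h5 : p - S p = 0 := norm_eq_zero.1 h4
  have := sub_eq_zero.1 h5
  exact this.symm

lemma demiclosed_fix {H : Type*} [NormedAddCommGroup H] [InnerProductSpace ℝ H]
    (S : H → H) (p : H) (y : ℕ → H) (Cb : ℝ)
    (h1 : ∀ n, ‖y n - S p‖ ≤ ‖S (y n) - y n‖ + ‖y n - p‖)
    (hyb : ∀ n, ‖y n - p‖ ≤ Cb)
    (hδ : Tendsto (fun n => ‖S (y n) - y n‖) atTop (𝓝 0))
    (hinner : Tendsto (fun n => ⟪y n - p, p - S p⟫) atTop (𝓝 0)) : S p = p := by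
  have hkey : ∀ n, ‖p - S p‖ ^ 2
      ≤ ‖S (y n) - y n‖ * (‖S (y n) - y n‖ + 2 * Cb) - 2 * ⟪y n - p, p - S p⟫ := by
    intro n
    have hexp := norm_add_sq_real (y n - p) (p - S p)
    have hsum : (y n - p) + (p - S p) = y n - S p := by abel
    rw [hsum] at hexp
    nlinarith [norm_nonneg (y n - S p), norm_nonneg (S (y n) - y n),
      norm_nonneg (y n - p), hyb n, h1 n,
      mul_nonneg (norm_nonneg (S (y n) - y n)) (sub_nonneg.2 (hyb n))]
  have hRHS : Tendsto (fun n => ‖S (y n) - y n‖ * (‖S (y n) - y n‖ + 2 * Cb)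
      - 2 * ⟪y n - p, p - S p⟫) atTop (𝓝 0) := by
    have := (hδ.mul (hδ.add (tendsto_const_nhds (x := 2 * Cb)))).sub (hinner.const_mul 2)
    simpa using this
  have h11 : ‖p - S p‖ ^ 2 ≤ 0 := ge_of_tendsto' hRHS hkey
  have h12 : p - S p = 0 := by
    rw [← norm_eq_zero]
    nlinarith [norm_nonneg (p - S p)]
  exact (sub_eq_zero.1 h12).symm

theorem stmt7 {H : Type*} [NormedAddCommGroup H] [InnerProductSpace ℝ H] [CompleteSpace H]
    (D : Set H) (hD : D.Nonempty) (hDc : IsClosed D) (hDconv : Convex ℝ D)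
    (m : ℕ) (hm : 2 ≤ m) (T : ℕ → H → H)
    (hmap : ∀ i ∈ Finset.Icc 1 m, Set.MapsTo (T i) D D)
    (hne : ∀ i ∈ Finset.Icc 1 m, ∀ x ∈ D, ∀ y ∈ D, ‖T i x - T i y‖ ≤ ‖x - y‖)
    (η : ℝ) (hη : η ∈ Set.Ioc (0:ℝ) 1)
    (x : ℝ → ℕ → H)
    (hxD : ∀ ε ∈ Set.Ioo 0 η, ∀ i ≤ m, x ε i ∈ D)
    (hx0 : ∀ ε ∈ Set.Ioo 0 η, x ε 0 = x ε m)
    (hcyc : ∀ ε ∈ Set.Ioo 0 η, ∀ i ∈ Finset.Icc 1 m,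
      x ε i = x ε (i - 1) + ε • (T i (x ε (i - 1)) - x ε (i - 1)))
    (hbdd : ∃ β : ℝ, ∀ ε ∈ Set.Ioo 0 η, ‖x ε m‖ ≤ β) :
    (∃ β' : ℝ, ∀ ε ∈ Set.Ioo 0 η, ∀ i ≤ m, ‖x ε i‖ ≤ β') ∧
    (∀ i ∈ Finset.Icc 1 m,
      Tendsto (fun ε => ‖x ε i - x ε (i - 1)‖) (𝓝[Set.Ioo 0 η] 0) (𝓝 0)) ∧
    (Tendsto (fun ε => (m:ℝ)⁻¹ • (∑ i ∈ Finset.Icc 1 m, T i (x ε m)) - x ε m)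
      (𝓝[Set.Ioo 0 η] 0) (𝓝 0)) ∧
    (∃ p ∈ D, (m:ℝ)⁻¹ • (∑ i ∈ Finset.Icc 1 m, T i p) = p) ∧
    (∀ εn : ℕ → ℝ, (∀ n, εn n ∈ Set.Ioo 0 η) → Tendsto εn atTop (𝓝 0) →
      ∀ l : ℕ → H,
        (∀ i ∈ Finset.Icc 1 m, ∀ v : H,
          Tendsto (fun n => ⟪x (εn n) i, v⟫) atTop (𝓝 ⟪l i, v⟫)) →
        (∀ i ∈ Finset.Icc 1 m, l i = l m) ∧ l m ∈ D ∧
          (m:ℝ)⁻¹ • (∑ i ∈ Finset.Icc 1 m, T i (l m)) = l m) := by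
  obtain ⟨β, hβ⟩ := hbdd
  obtain ⟨d, hd⟩ := hD
  have hm0 : (0:ℝ) < m := by exact_mod_cast Nat.lt_of_lt_of_le (by norm_num) hm
  have hmm : m ∈ Finset.Icc 1 m := Finset.mem_Icc.2 ⟨by omega, le_rfl⟩
  have hcard : (Finset.Icc 1 m).card = m := by rw [Nat.card_Icc]; omega
  set C := ∑ i ∈ Finset.Icc 1 m, ‖T i d‖ with hCdef
  have hC0 : (0:ℝ) ≤ C := Finset.sum_nonneg fun i _ => norm_nonneg _
  have hTd : ∀ i ∈ Finset.Icc 1 m, ‖T i d‖ ≤ C := fun i hi =>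
    Finset.single_le_sum (f := fun j => ‖T j d‖) (fun j _ => norm_nonneg _) hi
  have hTbound : ∀ i ∈ Finset.Icc 1 m, ∀ w ∈ D, ‖T i w‖ ≤ ‖w‖ + ‖d‖ + C := by
    intro i hi w hw
    calc ‖T i w‖ = ‖(T i w - T i d) + T i d‖ := by rw [sub_add_cancel]
      _ ≤ ‖T i w - T i d‖ + ‖T i d‖ := norm_add_le _ _
      _ ≤ ‖w - d‖ + C := add_le_add (hne i hi w hw d hd) (hTd i hi)
      _ ≤ ‖w‖ + ‖d‖ + C := by linarith [norm_sub_le w d]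
  set B := max β 0 + ‖d‖ + C with hBdef
  have hB0 : (0:ℝ) ≤ B := by
    have := le_max_right β (0:ℝ); have := norm_nonneg d; simp only [hBdef]; linarith
  have hβB : β ≤ B := by
    have := le_max_left β (0:ℝ); have := norm_nonneg d; simp only [hBdef]; linarith
  have hdCB : ‖d‖ + C ≤ B := by
    have := le_max_right β (0:ℝ); simp only [hBdef]; linarith
  -- uniform bound on all coordinates
  have hbnd : ∀ ε ∈ Set.Ioo (0:ℝ) η, ∀ i, i ≤ m → ‖x ε i‖ ≤ 4 ^ i * B := by
    intro ε hε i
    induction i with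
    | zero =>
      intro _
      rw [hx0 ε hε]
      simpa using (hβ ε hε).trans hβB
    | succ n ih =>
      intro hnm
      have hn : n ≤ m := by omega
      have hmem : n + 1 ∈ Finset.Icc 1 m := Finset.mem_Icc.2 ⟨by omega, hnm⟩
      have hc := hcyc ε hε (n+1) hmem
      simp only [Nat.add_sub_cancel] at hc
      have hxn := ih hn
      have hT := hTbound (n+1) hmem _ (hxD ε hε n hn)
      have hε1 : ε ≤ 1 := le_trans hε.2.le hη.2
      have h4n : (1:ℝ) ≤ 4 ^ n := one_le_pow₀ (by norm_num)
      have hnn : (0:ℝ) ≤ ‖x ε n‖ := norm_nonneg _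
      calc ‖x ε (n+1)‖ = ‖x ε n + ε • (T (n+1) (x ε n) - x ε n)‖ := by rw [hc]
        _ ≤ ‖x ε n‖ + ε * ‖T (n+1) (x ε n) - x ε n‖ := by
            refine (norm_add_le _ _).trans ?_
            rw [norm_smul, Real.norm_of_nonneg hε.1.le]
        _ ≤ ‖x ε n‖ + ε * (‖T (n+1) (x ε n)‖ + ‖x ε n‖) := by
            have h1 := norm_sub_le (T (n+1) (x ε n)) (x ε n)
            nlinarith [hε.1.le, norm_nonneg (T (n+1) (x ε n))]
        _ ≤ 4 ^ (n+1) * B := by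
            have h2 : ε * (‖T (n+1) (x ε n)‖ + ‖x ε n‖) ≤ 2 * ‖x ε n‖ + (‖d‖ + C) := by
              nlinarith [hε.1.le, norm_nonneg (T (n+1) (x ε n)), norm_nonneg d]
            have h3 : (4:ℝ) ^ (n+1) = 4 * 4 ^ n := by ring
            nlinarith
  set β' : ℝ := 4 ^ m * B with hβ'def
  have hbnd' : ∀ ε ∈ Set.Ioo (0:ℝ) η, ∀ i ≤ m, ‖x ε i‖ ≤ β' := by
    intro ε hε i him
    refine (hbnd ε hε i him).trans ?_
    have : (4:ℝ) ^ i ≤ 4 ^ m := pow_le_pow_right₀ (by norm_num) him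
    exact mul_le_mul_of_nonneg_right this hB0
  have hβ'0 : (0:ℝ) ≤ β' := le_trans (norm_nonneg _) (hbnd' _ ⟨half_pos hη.1, half_lt_self hη.1⟩ m le_rfl)
  set K := 2 * β' + ‖d‖ + C with hKdef
  have hK0 : (0:ℝ) ≤ K := by
    have := norm_nonneg d; simp only [hKdef]; linarith
  -- consecutive step bound
  have hstep : ∀ ε ∈ Set.Ioo (0:ℝ) η, ∀ i ∈ Finset.Icc 1 m, ‖x ε i - x ε (i-1)‖ ≤ ε * K := by
    intro ε hε i hi
    obtain ⟨hi1, hi2⟩ := Finset.mem_Icc.1 hi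
    have hi1m : i - 1 ≤ m := by omega
    have hb2 : ‖x ε (i-1)‖ ≤ β' := hbnd' ε hε _ hi1m
    have hT := hTbound i hi _ (hxD ε hε _ hi1m)
    rw [hcyc ε hε i hi, add_sub_cancel_left, norm_smul, Real.norm_of_nonneg hε.1.le]
    have h4 : ‖T i (x ε (i-1)) - x ε (i-1)‖ ≤ K := by
      have h5 := norm_sub_le (T i (x ε (i-1))) (x ε (i-1))
      simp only [hKdef]; linarith
    exact mul_le_mul_of_nonneg_left h4 hε.1.le
  -- telescoped bound
  have htel : ∀ ε ∈ Set.Ioo (0:ℝ) η, ∀ j, j ≤ m → ∀ i ≤ j,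
      ‖x ε j - x ε i‖ ≤ ((j - i : ℕ) : ℝ) * (ε * K) := by
    intro ε hε j
    induction j with
    | zero =>
      intro _ i hi
      have : i = 0 := Nat.le_zero.1 hi
      simp [this]
    | succ n ih =>
      intro hn1 i hi
      rcases Nat.eq_or_lt_of_le hi with heq | hlt
      · simp [heq]
      · have hin : i ≤ n := Nat.lt_succ_iff.1 hlt
        have h1 := ih (by omega) i hin
        have h2 : ‖x ε (n+1) - x ε n‖ ≤ ε * K := by
          have := hstep ε hε (n+1) (Finset.mem_Icc.2 ⟨by omega, hn1⟩)
          simpa using this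
        have h3 : ‖x ε (n+1) - x ε i‖ ≤ ‖x ε (n+1) - x ε n‖ + ‖x ε n - x ε i‖ := by
          rw [← dist_eq_norm, ← dist_eq_norm, ← dist_eq_norm]
          exact dist_triangle _ _ _
        have hcast : ((n + 1 - i : ℕ) : ℝ) = ((n - i : ℕ) : ℝ) + 1 := by
          have he : n + 1 - i = (n - i) + 1 := by omega
          rw [he]; push_cast; ring
        rw [hcast]
        linarith
  -- bound for the averaged residual
  set SS : H → H := fun w => (m:ℝ)⁻¹ • ∑ i ∈ Finset.Icc 1 m, T i w with hSSdef
  have hS : ∀ ε ∈ Set.Ioo (0:ℝ) η, ‖SS (x ε m) - x ε m‖ ≤ ε * (2 * m * K) := by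
    intro ε hε
    -- zero-sum of displacements
    have hsum0 : ∑ i ∈ Finset.Icc 1 m, (T i (x ε (i-1)) - x ε (i-1)) = 0 := by
      have h1 : ∑ i ∈ Finset.Icc 1 m, (x ε i - x ε (i-1)) = x ε m - x ε 0 := by
        rw [← Finset.Ico_add_one_right_eq_Icc, Finset.sum_Ico_eq_sum_range]
        simp only [Nat.add_comm 1, Nat.add_sub_cancel]
        have : m + 1 - 1 = m := by omega
        exact Finset.sum_range_sub (fun j => x ε j) m
      have h2 : ∑ i ∈ Finset.Icc 1 m, (x ε i - x ε (i-1))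
          = ε • ∑ i ∈ Finset.Icc 1 m, (T i (x ε (i-1)) - x ε (i-1)) := by
        rw [Finset.smul_sum]
        refine Finset.sum_congr rfl fun i hi => ?_
        rw [hcyc ε hε i hi, add_sub_cancel_left]
      rw [hx0 ε hε, sub_self] at h1
      rw [h2] at h1
      rcases smul_eq_zero.1 h1 with h | h
      · exact absurd h (ne_of_gt hε.1)
      · exact h
    have hsplit : ∑ i ∈ Finset.Icc 1 m, ((T i (x ε m) - T i (x ε (i-1))) + (x ε (i-1) - x ε m))
        = (∑ i ∈ Finset.Icc 1 m, T i (x ε m)) - (Finset.Icc 1 m).card • x ε m := by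
      have he : ∀ i ∈ Finset.Icc 1 m, (T i (x ε m) - T i (x ε (i-1))) + (x ε (i-1) - x ε m)
          = (T i (x ε m) - x ε m) - (T i (x ε (i-1)) - x ε (i-1)) := fun i _ => by abel
      rw [Finset.sum_congr rfl he, Finset.sum_sub_distrib, hsum0, sub_zero,
        Finset.sum_sub_distrib, Finset.sum_const]
    have hG : SS (x ε m) - x ε m
        = (m:ℝ)⁻¹ • ∑ i ∈ Finset.Icc 1 m,
            ((T i (x ε m) - T i (x ε (i-1))) + (x ε (i-1) - x ε m)) := by
      simp only [hSSdef]
      rw [hsplit, hcard, smul_sub]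
      congr 1
      rw [← Nat.cast_smul_eq_nsmul ℝ m (x ε m), smul_smul, inv_mul_cancel₀ (ne_of_gt hm0),
        one_smul]
    have hterm : ∀ i ∈ Finset.Icc 1 m,
        ‖(T i (x ε m) - T i (x ε (i-1))) + (x ε (i-1) - x ε m)‖ ≤ 2 * ((m:ℝ) * (ε * K)) := by
      intro i hi
      obtain ⟨hi1, hi2⟩ := Finset.mem_Icc.1 hi
      have hi1m : i - 1 ≤ m := by omega
      have hgap : ‖x ε m - x ε (i-1)‖ ≤ ((m - (i-1) : ℕ) : ℝ) * (ε * K) :=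
        htel ε hε m le_rfl (i-1) hi1m
      have hgap2 : ‖x ε m - x ε (i-1)‖ ≤ (m:ℝ) * (ε * K) := by
        refine hgap.trans (mul_le_mul_of_nonneg_right ?_ (mul_nonneg hε.1.le hK0))
        exact_mod_cast Nat.cast_le.2 (Nat.sub_le m (i-1))
      calc ‖(T i (x ε m) - T i (x ε (i-1))) + (x ε (i-1) - x ε m)‖
          ≤ ‖T i (x ε m) - T i (x ε (i-1))‖ + ‖x ε (i-1) - x ε m‖ := norm_add_le _ _
        _ ≤ ‖x ε m - x ε (i-1)‖ + ‖x ε m - x ε (i-1)‖ := by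
            have h6 := hne i hi (x ε m) (hxD ε hε m le_rfl) (x ε (i-1)) (hxD ε hε _ hi1m)
            rw [norm_sub_rev (x ε (i-1))]
            exact add_le_add h6 le_rfl
        _ ≤ 2 * ((m:ℝ) * (ε * K)) := by linarith
    have hsumb : ‖∑ i ∈ Finset.Icc 1 m,
        ((T i (x ε m) - T i (x ε (i-1))) + (x ε (i-1) - x ε m))‖
        ≤ (m:ℝ) * (2 * ((m:ℝ) * (ε * K))) := by
      refine (norm_sum_le_of_le _ hterm).trans ?_
      rw [Finset.sum_const, hcard, nsmul_eq_mul]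
    rw [hG, norm_smul, Real.norm_of_nonneg (by positivity : (0:ℝ) ≤ (m:ℝ)⁻¹)]
    calc (m:ℝ)⁻¹ * ‖∑ i ∈ Finset.Icc 1 m,
          ((T i (x ε m) - T i (x ε (i-1))) + (x ε (i-1) - x ε m))‖
        ≤ (m:ℝ)⁻¹ * ((m:ℝ) * (2 * ((m:ℝ) * (ε * K)))) := by
          exact mul_le_mul_of_nonneg_left hsumb (by positivity)
      _ = ε * (2 * m * K) := by field_simp
  -- generic scaled tendsto
  have htend : ∀ c : ℝ, Tendsto (fun ε : ℝ => ε * c) (𝓝[Set.Ioo (0:ℝ) η] 0) (𝓝 0) := by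
    intro c
    have h1 : Tendsto (fun ε : ℝ => ε * c) (𝓝 0) (𝓝 (0 * c)) := tendsto_id.mul_const c
    rw [zero_mul] at h1
    exact h1.mono_left nhdsWithin_le_nhds
  -- S maps D to D and is nonexpansive
  have hSmap : Set.MapsTo SS D D := by
    intro w hw
    rw [show SS w = ∑ i ∈ Finset.Icc 1 m, (m:ℝ)⁻¹ • T i w from by
      simp only [hSSdef]; rw [Finset.smul_sum]]
    refine hDconv.sum_mem (fun i _ => by positivity) ?_ (fun i hi => hmap i hi hw)
    rw [Finset.sum_const, hcard, nsmul_eq_mul]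
    field_simp
  have hSne : ∀ a ∈ D, ∀ b ∈ D, ‖SS a - SS b‖ ≤ ‖a - b‖ := by
    intro a ha b hb
    have h1 : SS a - SS b = (m:ℝ)⁻¹ • ∑ i ∈ Finset.Icc 1 m, (T i a - T i b) := by
      simp only [hSSdef]
      rw [Finset.sum_sub_distrib, smul_sub]
    rw [h1, norm_smul, Real.norm_of_nonneg (by positivity : (0:ℝ) ≤ (m:ℝ)⁻¹)]
    have h2 : ‖∑ i ∈ Finset.Icc 1 m, (T i a - T i b)‖ ≤ (m:ℝ) * ‖a - b‖ := by
      refine (norm_sum_le_of_le _ (fun i hi => hne i hi a ha b hb)).trans ?_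
      rw [Finset.sum_const, hcard, nsmul_eq_mul]
    calc (m:ℝ)⁻¹ * ‖∑ i ∈ Finset.Icc 1 m, (T i a - T i b)‖
        ≤ (m:ℝ)⁻¹ * ((m:ℝ) * ‖a - b‖) := mul_le_mul_of_nonneg_left h2 (by positivity)
      _ = ‖a - b‖ := by field_simp
  -- the fixed-point part
  have hεseq : ∀ n : ℕ, η / ((n:ℝ) + 2) ∈ Set.Ioo (0:ℝ) η := by
    intro n
    constructor
    · exact div_pos hη.1 (by positivity)
    · rw [div_lt_iff₀ (by positivity)]
      nlinarith [hη.1, Nat.cast_nonneg (α := ℝ) n]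
  have hεto : Tendsto (fun n : ℕ => η / ((n:ℝ) + 2)) atTop (𝓝 0) :=
    tendsto_const_nhds.div_atTop
      (tendsto_atTop_add_const_right atTop 2 tendsto_natCast_atTop_atTop)
  have hfix : ∃ p ∈ D, SS p = p := by
    refine fix_of_approx hDc hDconv SS hSmap hSne (fun n => x (η / ((n:ℝ)+2)) m)
      (fun n => hxD _ (hεseq n) m le_rfl) β' (fun n => hbnd' _ (hεseq n) m le_rfl) ?_
    refine squeeze_zero (fun n => norm_nonneg _) (fun n => hS _ (hεseq n)) ?_
    simpa using hεto.mul_const (2 * m * K)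
  refine ⟨⟨β', hbnd'⟩, ?_, ?_, hfix, ?_⟩
  · -- part 2
    intro i hi
    exact squeeze_zero' (Filter.Eventually.of_forall fun ε => norm_nonneg _)
      (eventually_nhdsWithin_of_forall fun ε hε => hstep ε hε i hi) (htend K)
  · -- part 3
    rw [tendsto_zero_iff_norm_tendsto_zero]
    exact squeeze_zero' (Filter.Eventually.of_forall fun ε => norm_nonneg _)
      (eventually_nhdsWithin_of_forall fun ε hε => hS ε hε) (htend (2 * m * K))
  · -- part 5
    intro εn hεn hεn0 l hl
    have ha : ∀ i ∈ Finset.Icc 1 m, l i = l m := by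
      intro i hi
      obtain ⟨hi1, hi2⟩ := Finset.mem_Icc.1 hi
      set v := l i - l m with hv
      have t1 : Tendsto (fun n => ⟪x (εn n) i - x (εn n) m, v⟫) atTop (𝓝 ⟪l i - l m, v⟫) := by
        simp only [inner_sub_left]
        exact (hl i hi v).sub (hl m hmm v)
      have t2 : Tendsto (fun n => ⟪x (εn n) i - x (εn n) m, v⟫) atTop (𝓝 0) := by
        refine squeeze_zero_norm (a := fun n => εn n * ((m:ℝ) * K * ‖v‖)) (fun n => ?_) ?_
        · 
          have hb1 : ‖x (εn n) i - x (εn n) m‖ ≤ (m:ℝ) * (εn n * K) := by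
            rw [norm_sub_rev]
            refine (htel (εn n) (hεn n) m le_rfl i hi2).trans ?_
            refine mul_le_mul_of_nonneg_right ?_
              (mul_nonneg (hεn n).1.le hK0)
            exact_mod_cast Nat.cast_le.2 (Nat.sub_le m i)
          have h7 := abs_real_inner_le_norm (x (εn n) i - x (εn n) m) v
          rw [Real.norm_eq_abs]
          refine h7.trans ?_
          have := mul_le_mul_of_nonneg_right hb1 (norm_nonneg v)
          calc ‖x (εn n) i - x (εn n) m‖ * ‖v‖ ≤ (m:ℝ) * (εn n * K) * ‖v‖ := this
            _ = εn n * ((m:ℝ) * K * ‖v‖) := by ring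
        · simpa using hεn0.mul_const ((m:ℝ) * K * ‖v‖)
      have h8 : ⟪l i - l m, v⟫ = 0 := tendsto_nhds_unique t1 t2
      rw [hv] at h8
      exact sub_eq_zero.1 (inner_self_eq_zero.1 h8)
    have hbD : l m ∈ D := by
      obtain ⟨q, hqD, hq⟩ := exists_norm_eq_iInf_of_complete_convex ⟨d, hd⟩
        (hDc.isComplete) hDconv (l m)
      have hproj := (norm_eq_iInf_iff_real_inner_le_zero hDconv hqD).1 hq
      have t1 : Tendsto (fun n => ⟪x (εn n) m - q, l m - q⟫) atTop
          (𝓝 ⟪l m - q, l m - q⟫) := by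
        simp only [inner_sub_left]
        exact (hl m hmm (l m - q)).sub tendsto_const_nhds
      have h9 : ⟪l m - q, l m - q⟫ ≤ 0 := by
        refine le_of_tendsto t1 (Filter.Eventually.of_forall fun n => ?_)
        have := hproj (x (εn n) m) (hxD _ (hεn n) m le_rfl)
        rwa [real_inner_comm] at this
      have h10 : l m - q = 0 :=
        inner_self_eq_zero.1 (le_antisymm h9 real_inner_self_nonneg)
      rw [sub_eq_zero.1 h10]
      exact hqD
    refine ⟨ha, hbD, ?_⟩
    -- demiclosedness
    set p := l m with hp
    set yy : ℕ → H := fun n => x (εn n) m with hyy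
    have hyyD : ∀ n, yy n ∈ D := fun n => hxD _ (hεn n) m le_rfl
    have hδle : ∀ n, ‖SS (yy n) - yy n‖ ≤ εn n * (2 * m * K) := fun n => hS (εn n) (hεn n)
    have hδ0 : Tendsto (fun n => ‖SS (yy n) - yy n‖) atTop (𝓝 0) := by
      refine squeeze_zero (fun n => norm_nonneg _) hδle ?_
      simpa using hεn0.mul_const (2 * m * K)
    have hybd : ∀ n, ‖yy n - p‖ ≤ β' + ‖p‖ := fun n => by
      refine (norm_sub_le _ _).trans (add_le_add_left ?_ _)
      exact hbnd' _ (hεn n) m le_rfl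
    have hinner : Tendsto (fun n => ⟪yy n - p, p - SS p⟫) atTop (𝓝 0) := by
      have t3 : Tendsto (fun n => ⟪yy n, p - SS p⟫ - ⟪p, p - SS p⟫) atTop
          (𝓝 (⟪p, p - SS p⟫ - ⟪p, p - SS p⟫)) := (hl m hmm (p - SS p)).sub tendsto_const_nhds
      rw [sub_self] at t3
      refine t3.congr fun n => ?_
      rw [inner_sub_left]
    have h1 : ∀ n, ‖yy n - SS p‖ ≤ ‖SS (yy n) - yy n‖ + ‖yy n - p‖ := by
      intro n
      calc ‖yy n - SS p‖ = ‖(yy n - SS (yy n)) + (SS (yy n) - SS p)‖ := by abel_nf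
        _ ≤ ‖yy n - SS (yy n)‖ + ‖SS (yy n) - SS p‖ := norm_add_le _ _
        _ ≤ ‖SS (yy n) - yy n‖ + ‖yy n - p‖ := by
            rw [norm_sub_rev (yy n)]
            exact add_le_add le_rfl (hSne _ (hyyD n) _ hbD)
    exact demiclosed_fix SS p yy (β' + ‖p‖) h1 hybd hδ0 hinner
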